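/- Let f_pp(α) = 1 − α be the trade-off curve of a mechanism achieving perfect privacy. For any valid trade-off curve f, Δ↔(f_pp, f) = η(f)/2. -/
import Mathlib


/-- A valid trade-off curve: convex, continuous, non-increasing on `[0,1]`,
with values in `[0, 1-α]`, extended by `0` beyond `1`. -/
def IsTradeoff (f : ℝ → ℝ) : Prop :=
  ConvexOn ℝ (Set.Icc 0 1) f ∧
  ContinuousOn f (Set.Icc 0 1) ∧
  AntitoneOn f (Set.Icc 0 1) ∧
  (∀ α ∈ Set.Icc (0:ℝ) 1, 0 ≤ f α ∧ f α ≤ 1 - α) ∧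
  (∀ x : ℝ, 1 < x → f x = 0)

/-- The advantage `η(f) = sup_{α ∈ [0,1]} (1 - α - f α)`. -/
noncomputable def adv (f : ℝ → ℝ) : ℝ :=
  sSup ((fun α => 1 - α - f α) '' Set.Icc (0:ℝ) 1)

/-- The Δ-divergence `Δ(f, g) = inf {κ ≥ 0 : ∀ α ∈ [0,1], f (α + κ) - κ ≤ g α}`. -/
noncomputable def deltaDiv (f g : ℝ → ℝ) : ℝ :=
  sInf {κ : ℝ | 0 ≤ κ ∧ ∀ α ∈ Set.Icc (0:ℝ) 1, f (α + κ) - κ ≤ g α}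

/-- Symmetrized Δ-divergence. -/
noncomputable def deltaSym (f g : ℝ → ℝ) : ℝ :=
  max (deltaDiv f g) (deltaDiv g f)

/-- The perfect-privacy trade-off curve `f_pp(α) = 1 - α`, extended by `0` beyond `1`. -/
noncomputable def perfectPrivacy : ℝ → ℝ := fun x => if x ≤ 1 then 1 - x else 0

/-- For any valid trade-off curve `f`, `Δ↔(f_pp, f) = η(f) / 2`. -/
theorem deltaSym_perfectPrivacy_eq_half_adv (f : ℝ → ℝ) (hf : IsTradeoff f) :
    deltaSym perfectPrivacy f = adv f / 2 := by
  obtain ⟨-, -, -, hbd, hzero⟩ := hf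
  have hne : ((fun α => 1 - α - f α) '' Set.Icc (0:ℝ) 1).Nonempty :=
    ⟨1 - 0 - f 0, ⟨0, by simp, rfl⟩⟩
  have hBdd : BddAbove ((fun α => 1 - α - f α) '' Set.Icc (0:ℝ) 1) := by
    refine ⟨1, ?_⟩
    rintro x ⟨α, hα, rfl⟩
    have h1 := (hbd α hα).1
    have h2 := hα.1
    simp only
    linarith
  have hle : ∀ α ∈ Set.Icc (0:ℝ) 1, 1 - α - f α ≤ adv f := fun α hα =>
    le_csSup hBdd ⟨α, hα, rfl⟩
  have hη0 : 0 ≤ adv f := by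
    have h1 := (hbd 0 (by simp)).2
    have h2 := hle 0 (by simp)
    linarith
  have hA : deltaDiv perfectPrivacy f = adv f / 2 := by
    have hset : {κ : ℝ | 0 ≤ κ ∧ ∀ α ∈ Set.Icc (0:ℝ) 1, perfectPrivacy (α + κ) - κ ≤ f α}
        = Set.Ici (adv f / 2) := by
      ext κ
      simp only [Set.mem_setOf_eq, Set.mem_Ici]
      constructor
      · rintro ⟨hκ0, hcond⟩
        have hsup : adv f ≤ 2 * κ := by
          apply csSup_le hne
          rintro x ⟨α, hα, rfl⟩
          simp only
          by_cases h1 : α + κ ≤ 1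
          · have hc := hcond α hα
            rw [perfectPrivacy] at hc
            simp only [if_pos h1] at hc
            linarith
          · have hf0 := (hbd α hα).1
            push_neg at h1
            linarith
        linarith
      · intro hκ
        have hκ0 : 0 ≤ κ := le_trans (by linarith) hκ
        refine ⟨hκ0, fun α hα => ?_⟩
        by_cases h1 : α + κ ≤ 1
        · rw [perfectPrivacy]
          simp only [if_pos h1]
          have hc := hle α hα
          linarith
        · rw [perfectPrivacy]
          simp only [if_neg h1]
          have hf0 := (hbd α hα).1
          linarith
    rw [deltaDiv, hset, csInf_Ici]
  have hB : deltaDiv f perfectPrivacy ≤ adv f / 2 := by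
    apply csInf_le
    · exact ⟨0, fun κ hκ => hκ.1⟩
    · refine ⟨by linarith, fun α hα => ?_⟩
      have hpp : perfectPrivacy α = 1 - α := by
        rw [perfectPrivacy]
        simp only [if_pos hα.2]
      rw [hpp]
      by_cases h1 : α + adv f / 2 ≤ 1
      · have hc := (hbd (α + adv f / 2) ⟨by linarith [hα.1], h1⟩).2
        linarith
      · push_neg at h1
        rw [hzero _ h1]
        linarith [hα.2]
  rw [deltaSym, hA, max_eq_left hB]
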